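/- For every ρ₀ > 0, the function u(r) := (1/2)·(ρ₀⁴ − (r² − (√3/2)ρ₀²)²)^{1/2}, defined on the interval 0 < r < ((2+√3)/2)^{1/2}ρ₀, is twice differentiable with u'(r) = −r(r² − (√3/2)ρ₀²)/(ρ₀⁴ − (r² − (√3/2)ρ₀²)²)^{1/2}, and satisfies the rotationally symmetric vanishing-E₁ equation (1/3)r⁴u''(r)² − ((4/3)r·u'(r)³ + 2r³u'(r))·u''(r) + (1/3)u'(r)⁶/r² + u'(r)⁴ − r⁴ = 0; moreover u(r) − u(0⁺) = −(1/4)ρ₀² + (1/2)(ρ₀⁴ − (r² − (√3/2)ρ₀²)²)^{1/2} where u(0⁺) := lim_{r→0⁺} u(r) = (1/4)ρ₀². -/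

import Mathlib

open Filter

lemma key19 (r s ρ w : ℝ) (hr : r ≠ 0) (hw : w ≠ 0)
    (hw2 : w^2 = ρ^4 - (r^2-s)^2) (hs : s^2 = 3/4*ρ^4) :
    (1/3)*r^4*((-(3*r^2-s)*w^2 - 2*r^2*(r^2-s)^2)/w^3)^2
      - ((4/3)*r*(-(r*(r^2-s))/w)^3 + 2*r^3*(-(r*(r^2-s))/w))*((-(3*r^2-s)*w^2 - 2*r^2*(r^2-s)^2)/w^3)
      + (1/3)*(-(r*(r^2-s))/w)^6/r^2 + (-(r*(r^2-s))/w)^4 - r^4 = 0 := by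
  have hP : (-(3*r^2-s)*w^2 - 2*r^2*(r^2-s)^2)^2
      + (4*(r^2-s)^3 + 6*(r^2-s)*w^2)*(-(3*r^2-s)*w^2 - 2*r^2*(r^2-s)^2)
      + (r^2-s)^6 + 3*(r^2-s)^4*w^2 - 3*w^6 = 0 := by
    linear_combination (-3*w^4 - 3*ρ^4*w^2 - 3*ρ^8 - 2*s^2*w^2 + s^2*ρ^4 + s^4
      + 12*r^2*s*w^2 + 6*r^2*s*ρ^4 + 4*r^2*s^3 - 6*r^4*w^2 - 3*r^4*ρ^4
      - 14*r^4*s^2 + 12*r^6*s - 3*r^8) * hw2 + (4*ρ^8) * hs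
  field_simp
  linear_combination r^4 * hP

theorem stmt_19 (ρ₀ : ℝ) (hρ₀ : 0 < ρ₀) (R : ℝ)
    (hR : R = Real.sqrt ((2 + Real.sqrt 3) / 2) * ρ₀)
    (u : ℝ → ℝ)
    (hu : ∀ r, u r =
      (1 / 2) * Real.sqrt (ρ₀ ^ 4 - (r ^ 2 - (Real.sqrt 3 / 2) * ρ₀ ^ 2) ^ 2)) :
    (∀ r ∈ Set.Ioo (0 : ℝ) R,
      HasDerivAt u (-(r * (r ^ 2 - (Real.sqrt 3 / 2) * ρ₀ ^ 2))
        / Real.sqrt (ρ₀ ^ 4 - (r ^ 2 - (Real.sqrt 3 / 2) * ρ₀ ^ 2) ^ 2)) r)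
    ∧ (∀ r ∈ Set.Ioo (0 : ℝ) R, DifferentiableAt ℝ (deriv u) r)
    ∧ (∀ r ∈ Set.Ioo (0 : ℝ) R,
        (1 / 3) * r ^ 4 * (deriv (deriv u) r) ^ 2
          - ((4 / 3) * r * (deriv u r) ^ 3 + 2 * r ^ 3 * deriv u r) * deriv (deriv u) r
          + (1 / 3) * (deriv u r) ^ 6 / r ^ 2 + (deriv u r) ^ 4 - r ^ 4 = 0)
    ∧ Tendsto u (nhdsWithin 0 (Set.Ioi 0)) (nhds ((1 / 4) * ρ₀ ^ 2))
    ∧ (∀ r ∈ Set.Ioo (0 : ℝ) R,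
        u r - (1 / 4) * ρ₀ ^ 2 = -(1 / 4) * ρ₀ ^ 2
          + (1 / 2) * Real.sqrt (ρ₀ ^ 4 - (r ^ 2 - (Real.sqrt 3 / 2) * ρ₀ ^ 2) ^ 2)) := by
  have hufun : u = fun r => (1 / 2) * Real.sqrt (ρ₀ ^ 4 - (r ^ 2 - (Real.sqrt 3 / 2) * ρ₀ ^ 2) ^ 2) :=
    funext hu
  subst hufun
  set s : ℝ := Real.sqrt 3 / 2 * ρ₀ ^ 2 with hsdef
  have h3 : Real.sqrt 3 ^ 2 = 3 := Real.sq_sqrt (by norm_num)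
  have h3nn : 0 ≤ Real.sqrt 3 := Real.sqrt_nonneg 3
  have h3lt : Real.sqrt 3 < 2 := by nlinarith
  have hR2 : R ^ 2 = (2 + Real.sqrt 3) / 2 * ρ₀ ^ 2 := by
    rw [hR, mul_pow, Real.sq_sqrt (by positivity)]
  -- positivity of the radicand
  have hgpos : ∀ r ∈ Set.Ioo (0 : ℝ) R, 0 < ρ₀ ^ 4 - (r ^ 2 - s) ^ 2 := by
    intro r hr
    obtain ⟨hr0, hrR⟩ := hr
    have hr2 : r ^ 2 < R ^ 2 := by nlinarith
    have h1 : r ^ 2 - s < ρ₀ ^ 2 := by rw [hR2] at hr2; rw [hsdef]; nlinarith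
    have h2 : -(ρ₀ ^ 2) < r ^ 2 - s := by rw [hsdef]; nlinarith
    nlinarith
  -- first derivative
  have hder1 : ∀ r ∈ Set.Ioo (0 : ℝ) R,
      HasDerivAt (fun r => (1 / 2) * Real.sqrt (ρ₀ ^ 4 - (r ^ 2 - s) ^ 2))
        (-(r * (r ^ 2 - s)) / Real.sqrt (ρ₀ ^ 4 - (r ^ 2 - s) ^ 2)) r := by
    intro r hr
    have hg := hgpos r hr
    have hw : Real.sqrt (ρ₀ ^ 4 - (r ^ 2 - s) ^ 2) ≠ 0 := ne_of_gt (Real.sqrt_pos.mpr hg)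
    have h1 : HasDerivAt (fun x : ℝ => x ^ 2 - s) (2 * r) r := by
      simpa using (hasDerivAt_pow 2 r).sub_const s
    have hg' : HasDerivAt (fun x : ℝ => ρ₀ ^ 4 - (x ^ 2 - s) ^ 2) (-(4 * r * (r ^ 2 - s))) r := by
      have := (h1.pow 2).const_sub (ρ₀ ^ 4)
      refine this.congr_deriv ?_
      push_cast; ring
    have hsq : HasDerivAt (fun x : ℝ => Real.sqrt (ρ₀ ^ 4 - (x ^ 2 - s) ^ 2))
        (1 / (2 * Real.sqrt (ρ₀ ^ 4 - (r ^ 2 - s) ^ 2)) * (-(4 * r * (r ^ 2 - s)))) r :=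
      (Real.hasDerivAt_sqrt (ne_of_gt hg)).comp r hg'
    have hval : ∀ w : ℝ, w ≠ 0 →
        -(r * (r ^ 2 - s)) / w = (1 / 2 : ℝ) * (1 / (2 * w) * -(4 * r * (r ^ 2 - s))) := by
      intro w hw; field_simp; ring
    have := hsq.const_mul (1 / 2 : ℝ)
    refine this.congr_deriv ?_
    exact (hval _ hw).symm
  -- derivative of the first derivative
  have hder2 : ∀ r ∈ Set.Ioo (0 : ℝ) R,
      HasDerivAt (fun x => -(x * (x ^ 2 - s)) / Real.sqrt (ρ₀ ^ 4 - (x ^ 2 - s) ^ 2))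
        ((-(3 * r ^ 2 - s) * Real.sqrt (ρ₀ ^ 4 - (r ^ 2 - s) ^ 2) ^ 2
            - 2 * r ^ 2 * (r ^ 2 - s) ^ 2) / Real.sqrt (ρ₀ ^ 4 - (r ^ 2 - s) ^ 2) ^ 3) r := by
    intro r hr
    have hg := hgpos r hr
    have hwpos : 0 < Real.sqrt (ρ₀ ^ 4 - (r ^ 2 - s) ^ 2) := Real.sqrt_pos.mpr hg
    have hw : Real.sqrt (ρ₀ ^ 4 - (r ^ 2 - s) ^ 2) ≠ 0 := ne_of_gt hwpos
    have hw2 : Real.sqrt (ρ₀ ^ 4 - (r ^ 2 - s) ^ 2) ^ 2 = ρ₀ ^ 4 - (r ^ 2 - s) ^ 2 :=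
      Real.sq_sqrt hg.le
    have h1 : HasDerivAt (fun x : ℝ => x ^ 2 - s) (2 * r) r := by
      simpa using (hasDerivAt_pow 2 r).sub_const s
    have hg' : HasDerivAt (fun x : ℝ => ρ₀ ^ 4 - (x ^ 2 - s) ^ 2) (-(4 * r * (r ^ 2 - s))) r := by
      have := (h1.pow 2).const_sub (ρ₀ ^ 4)
      refine this.congr_deriv ?_
      push_cast; ring
    have hsq : HasDerivAt (fun x : ℝ => Real.sqrt (ρ₀ ^ 4 - (x ^ 2 - s) ^ 2))
        (1 / (2 * Real.sqrt (ρ₀ ^ 4 - (r ^ 2 - s) ^ 2)) * (-(4 * r * (r ^ 2 - s)))) r :=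
      (Real.hasDerivAt_sqrt (ne_of_gt hg)).comp r hg'
    have hn : HasDerivAt (fun x : ℝ => -(x * (x ^ 2 - s))) (-(3 * r ^ 2 - s)) r := by
      have := ((hasDerivAt_id r).mul h1).neg
      simp only [id_eq] at this
      refine this.congr_deriv ?_
      ring
    have hval : ∀ w : ℝ, w ≠ 0 →
        (-(3 * r ^ 2 - s) * w ^ 2 - 2 * r ^ 2 * (r ^ 2 - s) ^ 2) / w ^ 3
          = (-(3 * r ^ 2 - s) * w - -(r * (r ^ 2 - s)) * (1 / (2 * w) * -(4 * r * (r ^ 2 - s))))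
            / w ^ 2 := by
      intro w hw; field_simp; ring
    have := hn.div hsq hw
    refine this.congr_deriv ?_
    exact (hval _ hw).symm
  have hderiv_eq : ∀ r ∈ Set.Ioo (0 : ℝ) R,
      deriv (fun r => (1 / 2) * Real.sqrt (ρ₀ ^ 4 - (r ^ 2 - s) ^ 2)) r
        = -(r * (r ^ 2 - s)) / Real.sqrt (ρ₀ ^ 4 - (r ^ 2 - s) ^ 2) := fun r hr =>
    (hder1 r hr).deriv
  have hev : ∀ r ∈ Set.Ioo (0 : ℝ) R,
      deriv (fun r => (1 / 2) * Real.sqrt (ρ₀ ^ 4 - (r ^ 2 - s) ^ 2))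
        =ᶠ[nhds r] fun x => -(x * (x ^ 2 - s)) / Real.sqrt (ρ₀ ^ 4 - (x ^ 2 - s) ^ 2) := by
    intro r hr
    filter_upwards [isOpen_Ioo.mem_nhds hr] with x hx using hderiv_eq x hx
  refine ⟨hder1, ?_, ?_, ?_, ?_⟩
  · intro r hr
    exact ((hev r hr).differentiableAt_iff).mpr (hder2 r hr).differentiableAt
  · intro r hr
    have hg := hgpos r hr
    have hwpos : 0 < Real.sqrt (ρ₀ ^ 4 - (r ^ 2 - s) ^ 2) := Real.sqrt_pos.mpr hg
    rw [(hev r hr).deriv_eq, (hder2 r hr).deriv]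
    rw [hderiv_eq r hr]
    exact key19 r s ρ₀ (Real.sqrt (ρ₀ ^ 4 - (r ^ 2 - s) ^ 2)) (ne_of_gt hr.1)
      (ne_of_gt hwpos) (Real.sq_sqrt hg.le)
      (by rw [hsdef]; linear_combination (ρ₀ ^ 4 / 4) * h3)
  · have hc : Continuous (fun r : ℝ => (1 / 2) * Real.sqrt (ρ₀ ^ 4 - (r ^ 2 - s) ^ 2)) := by
      fun_prop
    have h0 : (1 / 2) * Real.sqrt (ρ₀ ^ 4 - ((0 : ℝ) ^ 2 - s) ^ 2) = (1 / 4) * ρ₀ ^ 2 := by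
      have : ρ₀ ^ 4 - ((0 : ℝ) ^ 2 - s) ^ 2 = (ρ₀ ^ 2 / 2) ^ 2 := by
        rw [hsdef]; linear_combination (-(ρ₀ ^ 4) / 4) * h3
      rw [this, Real.sqrt_sq (by positivity)]
      ring
    have := (hc.tendsto 0).mono_left (nhdsWithin_le_nhds (s := Set.Ioi (0:ℝ)))
    rw [h0] at this
    exact this
  · intro r hr
    ring
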